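/- The function x ↦ exp(ψ₀(x)) is strictly convex on (0,∞). -/

import Mathlib

/-- The polygamma function `ψₙ`: the `(n+1)`-st derivative of `log ∘ Γ`. -/
noncomputable def polygamma (n : ℕ) (x : ℝ) : ℝ :=
  iteratedDeriv (n + 1) (fun y => Real.log (Real.Gamma y)) x

open Real Set Filter Topology Finset

noncomputable def PG1 (x : ℝ) : ℝ := ∑' n : ℕ, 1 / (x + n) ^ 2
noncomputable def PG2 (x : ℝ) : ℝ := ∑' n : ℕ, 2 / (x + n) ^ 3
noncomputable def FF (x : ℝ) : ℝ := PG1 x ^ 2 - PG2 x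

lemma sum_base {k : ℕ} (hk : 2 ≤ k) : Summable (fun n : ℕ => 1 / ((n : ℝ) + 1) ^ k) := by
  have h := (summable_nat_add_iff 1).mpr (Real.summable_one_div_nat_pow.mpr hk)
  exact h.congr fun n => by push_cast; ring

lemma sum_inv_pow {c : ℝ} (hc : 0 < c) {k : ℕ} (hk : 2 ≤ k) :
    Summable (fun n : ℕ => 1 / (c + n) ^ k) := by
  have hpos : ∀ n : ℕ, (0:ℝ) < c + n := fun n =>
    add_pos_of_pos_of_nonneg hc (Nat.cast_nonneg n)
  refine (summable_nat_add_iff 1).mp ?_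
  refine Summable.of_nonneg_of_le (fun n => le_of_lt (one_div_pos.mpr (pow_pos (hpos _) k)))
    (fun n => ?_) (sum_base hk)
  have h1 : ((n:ℝ)+1) ≤ c + (↑(n+1) : ℕ) := by push_cast; linarith
  exact one_div_le_one_div_of_le (by positivity) (pow_le_pow_left₀ (by positivity) h1 k)

lemma hpos' {c : ℝ} (hc : 0 < c) (n : ℕ) : (0:ℝ) < c + n :=
  add_pos_of_pos_of_nonneg hc (Nat.cast_nonneg n)

lemma sum_inv_pow_shift {c : ℝ} (hc : 0 < c) {k : ℕ} (hk : 2 ≤ k) :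
    Summable (fun n : ℕ => 1 / (c + n + 1) ^ k) :=
  (sum_inv_pow (by linarith : (0:ℝ) < c + 1) hk).congr fun n => by ring_nf

lemma hasSum_telescope {x : ℝ} (hx : 0 < x) :
    HasSum (fun n : ℕ => 1/(x+n) - 1/(x+n+1)) (1/x) := by
  have hpos := hpos' hx
  rw [hasSum_iff_tendsto_nat_of_nonneg]
  · have heq : ∀ N : ℕ, ∑ i ∈ range N, (1/(x+i) - 1/(x+i+1)) = 1/x - 1/(x+N) := by
      intro N
      rw [show (1:ℝ)/x - 1/(x+N) = (fun i : ℕ => 1/(x+(i:ℝ))) 0 - (fun i : ℕ => 1/(x+(i:ℝ))) N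
        by norm_num, ← Finset.sum_range_sub' (fun i : ℕ => 1/(x+(i:ℝ))) N]
      refine Finset.sum_congr rfl fun i _ => ?_
      push_cast; ring_nf
    have ht : Tendsto (fun N : ℕ => 1/(x+(N:ℝ))) atTop (𝓝 0) := by
      have h1 : Tendsto (fun N : ℕ => x + (N:ℝ)) atTop atTop :=
        tendsto_atTop_add_const_left _ x tendsto_natCast_atTop_atTop
      simpa [one_div, Pi.inv_def] using h1.inv_tendsto_atTop
    have h2 : Tendsto (fun N : ℕ => 1/x - 1/(x+(N:ℝ))) atTop (𝓝 (1/x - 0)) :=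
      Tendsto.sub tendsto_const_nhds ht
    rw [sub_zero] at h2
    exact Tendsto.congr (fun N => (heq N).symm) h2
  · intro n
    have h1 : 1/(x+n+1) ≤ 1/(x+n) :=
      one_div_le_one_div_of_le (hpos n) (by linarith)
    linarith

lemma PG1_eq {x : ℝ} (hx : 0 < x) : PG1 x = 1/x^2 + ∑' n : ℕ, 1/(x+n+1)^2 := by
  rw [PG1, (sum_inv_pow hx le_rfl).tsum_eq_zero_add]
  congr 1
  · norm_num
  · exact tsum_congr fun n => by push_cast; ring_nf

lemma PG2_eq {x : ℝ} (hx : 0 < x) : PG2 x = 2/x^3 + ∑' n : ℕ, 2/(x+n+1)^3 := by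
  rw [PG2, Summable.tsum_eq_zero_add]
  · congr 1
    · norm_num
    · exact tsum_congr fun n => by push_cast; ring_nf
  · exact ((sum_inv_pow hx (by norm_num : 2 ≤ 3)).mul_left 2).congr fun n => by ring

lemma PG1_shift {x : ℝ} : PG1 (x+1) = ∑' n : ℕ, 1/(x+n+1)^2 :=
  tsum_congr fun n => by ring_nf

lemma PG2_shift {x : ℝ} : PG2 (x+1) = ∑' n : ℕ, 2/(x+n+1)^3 :=
  tsum_congr fun n => by ring_nf

lemma PG1_rec' {x : ℝ} (hx : 0 < x) : PG1 x = 1/x^2 + PG1 (x+1) := by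
  rw [PG1_eq hx, PG1_shift]

lemma PG2_rec' {x : ℝ} (hx : 0 < x) : PG2 x = 2/x^3 + PG2 (x+1) := by
  rw [PG2_eq hx, PG2_shift]

lemma PG1_pos {x : ℝ} (hx : 0 < x) : 0 < PG1 x := by
  exact Summable.tsum_pos (sum_inv_pow hx le_rfl) (fun n => by positivity) 0
    (one_div_pos.mpr (pow_pos (hpos' hx 0) 2))

lemma PG2_nonneg {x : ℝ} (hx : 0 < x) : 0 ≤ PG2 x :=
  tsum_nonneg fun n => le_of_lt (div_pos two_pos (pow_pos (hpos' hx n) 3))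

lemma PG1_le {x : ℝ} (hx : 0 < x) : PG1 x ≤ 1/x^2 + 1/x := by
  rw [PG1_eq hx]
  have hpos := hpos' hx
  have h1 : ∑' n : ℕ, 1/(x+n+1)^2 ≤ 1/x := by
    rw [← (hasSum_telescope hx).tsum_eq]
    refine Summable.tsum_le_tsum (fun n => ?_) (sum_inv_pow_shift hx le_rfl)
      (hasSum_telescope hx).summable
    have e : 1/(x+n) - 1/(x+n+1) = 1/((x+n)*(x+n+1)) := by
      have := hpos n; field_simp; ring
    rw [e]
    refine one_div_le_one_div_of_le (by have := hpos n; positivity) ?_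
    nlinarith [hpos n]
  linarith

lemma PG2_le {x : ℝ} (hx1 : 1 ≤ x) : PG2 x ≤ 2*(1/x^2 + 1/x) := by
  have hx : 0 < x := by linarith
  have h1 : PG2 x ≤ 2 * PG1 x := by
    rw [PG2, PG1, ← tsum_mul_left]
    refine Summable.tsum_le_tsum (fun n => ?_) (((sum_inv_pow hx (by norm_num : 2 ≤ 3)).mul_left 2).congr
      fun n => by ring) ((sum_inv_pow hx le_rfl).mul_left 2)
    have h2 : (1:ℝ) ≤ x + n := le_trans hx1 (by linarith [Nat.cast_nonneg (α := ℝ) n])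
    have h3 : (x+(n:ℝ))^2 ≤ (x+n)^3 := pow_le_pow_right₀ h2 (by norm_num)
    rw [mul_one_div]
    exact div_le_div_of_nonneg_left (by norm_num) (pow_pos (hpos' hx n) 2) h3
  nlinarith [PG1_le hx]

lemma key2 {x : ℝ} (hx : 0 < x) : 1/x + 1/(2*x^2) < PG1 x := by
  have hpos := hpos' hx
  have hs1 : Summable (fun n : ℕ => 1/(x+n)^2) := sum_inv_pow hx le_rfl
  have hs2 : Summable (fun n : ℕ => 1/(x+n+1)^2) := sum_inv_pow_shift hx le_rfl
  have hsA : Summable (fun n : ℕ => (1/(x+n)^2 + 1/(x+n+1)^2)/2) := (hs1.add hs2).div_const 2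
  have hAsum : ∑' n : ℕ, (1/(x+n)^2 + 1/(x+n+1)^2)/2 = PG1 x - 1/(2*x^2) := by
    have e1 : ∑' n : ℕ, 1/(x+n+1)^2 = PG1 x - 1/x^2 := by rw [PG1_eq hx]; ring
    rw [tsum_div_const, hs1.tsum_add hs2, e1, ← PG1]
    ring
  have hlt : ∑' n : ℕ, (1/(x+n) - 1/(x+n+1)) < ∑' n : ℕ, (1/(x+n)^2 + 1/(x+n+1)^2)/2 := by
    refine Summable.tsum_lt_tsum (i := 0) (fun n => ?_) ?_ (hasSum_telescope hx).summable hsA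
    · have hpn := hpos n
      have e : 1/(x+n) - 1/(x+n+1) = (1/(x+n))*(1/(x+n+1)) := by field_simp; ring
      have q1 : (1/(x+(n:ℝ)))^2 = 1/(x+n)^2 := by rw [div_pow]; norm_num
      have q2 : (1/(x+(n:ℝ)+1))^2 = 1/(x+n+1)^2 := by rw [div_pow]; norm_num
      rw [e]
      nlinarith [sq_nonneg (1/(x+(n:ℝ)) - 1/(x+n+1)), q1, q2]
    · have hp0 := hpos 0
      have e : 1/(x+(0:ℕ)) - 1/(x+(0:ℕ)+1) = (1/(x+(0:ℕ)))*(1/(x+(0:ℕ)+1)) := by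
        push_cast; field_simp; ring
      have q1 : (1/(x+((0:ℕ):ℝ)))^2 = 1/(x+((0:ℕ):ℝ))^2 := by rw [div_pow]; norm_num
      have q2 : (1/(x+((0:ℕ):ℝ)+1))^2 = 1/(x+((0:ℕ):ℝ)+1)^2 := by rw [div_pow]; norm_num
      rw [e]
      have hab : 0 < 1/(x+(0:ℕ)) - 1/(x+(0:ℕ)+1) := by
        push_cast
        have : 1/(x+1) < 1/x := one_div_lt_one_div_of_lt hx (by linarith)
        simpa using sub_pos.mpr this
      nlinarith [mul_pos hab hab, q1, q2]
  rw [(hasSum_telescope hx).tsum_eq, hAsum] at hlt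
  linarith

lemma key1 {x : ℝ} (hx : 0 < x) : FF (x+1) < FF x := by
  have h2 := key2 hx
  have r1 := PG1_rec' hx
  have r2 := PG2_rec' hx
  have hFF : FF x - FF (x+1) = (1/x^2) * (2*PG1 x - 1/x^2) - 2/x^3 := by
    have e1 : PG1 (x+1) = PG1 x - 1/x^2 := by linarith
    have e2 : PG2 (x+1) = PG2 x - 2/x^3 := by linarith
    rw [FF, FF, e1, e2]; ring
  have h3 : 2/x < 2*PG1 x - 1/x^2 := by
    have e : (2:ℝ)*(1/(2*x^2)) = 1/x^2 := by ring
    have e2 : (2:ℝ)/x = 2*(1/x) := by ring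
    linarith
  have h4 : (1/x^2) * (2/x) = 2/x^3 := by ring
  have h5 : (1/x^2)*(2/x) < (1/x^2)*(2*PG1 x - 1/x^2) :=
    mul_lt_mul_of_pos_left h3 (by positivity)
  linarith

lemma FF_tendsto {x : ℝ} (hx : 0 < x) :
    Tendsto (fun n : ℕ => FF (x + n)) atTop (𝓝 0) := by
  have hq : Tendsto (fun n : ℕ => 1/(x+(n:ℝ))) atTop (𝓝 0) := by
    have h1 : Tendsto (fun N : ℕ => x + (N:ℝ)) atTop atTop :=
      tendsto_atTop_add_const_left _ x tendsto_natCast_atTop_atTop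
    simpa [one_div, Pi.inv_def] using h1.inv_tendsto_atTop
  have hb : Tendsto (fun n : ℕ => ((1/(x+(n:ℝ)))^2 + 1/(x+n))^2
      + 2*((1/(x+(n:ℝ)))^2 + 1/(x+n))) atTop (𝓝 (((0:ℝ)^2+0)^2 + 2*((0:ℝ)^2+0))) :=
    (((hq.pow 2).add hq).pow 2).add (((hq.pow 2).add hq).const_mul 2)
  rw [show (((0:ℝ)^2+0)^2 + 2*((0:ℝ)^2+0)) = 0 by norm_num] at hb
  refine squeeze_zero_norm' ?_ hb
  filter_upwards [eventually_ge_atTop 1] with n hn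
  have hy : (0:ℝ) < x + n := hpos' hx n
  have hy1 : (1:ℝ) ≤ x + n := by
    have : (1:ℝ) ≤ (n:ℝ) := by exact_mod_cast hn
    linarith
  have hP1le := PG1_le hy
  have hP1pos := PG1_pos hy
  have hP2le := PG2_le hy1
  have hP2nn := PG2_nonneg hy
  have hsq : (1/(x+(n:ℝ)))^2 = 1/(x+n)^2 := by rw [div_pow]; norm_num
  rw [Real.norm_eq_abs, FF, abs_le, hsq]
  constructor
  · nlinarith [sq_nonneg (PG1 (x+n)), sq_nonneg (1/(x+(n:ℝ))^2 + 1/(x+n))]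
  · nlinarith [sq_nonneg (1/(x+(n:ℝ))^2 + 1/(x+n) - PG1 (x+n)),
      sq_nonneg (1/(x+(n:ℝ))^2 + 1/(x+n) + PG1 (x+n)), hP1pos.le, hP1le, hP2nn]

lemma FF_nonneg {x : ℝ} (hx : 0 < x) : 0 ≤ FF x := by
  have mono : ∀ n : ℕ, FF (x + n) ≤ FF x := by
    intro n
    induction n with
    | zero => simp
    | succ n ih =>
      have h1 : FF (x + (n+1:ℕ)) = FF ((x + n) + 1) := by push_cast; ring_nf
      rw [h1]
      exact le_trans (key1 (hpos' hx n)).le ih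
  exact le_of_tendsto (FF_tendsto hx) (Eventually.of_forall mono)

lemma FF_pos {x : ℝ} (hx : 0 < x) : 0 < FF x :=
  lt_of_le_of_lt (FF_nonneg (by linarith : (0:ℝ) < x + 1)) (key1 hx)

local notation "γ" => Real.eulerMascheroniConstant

noncomputable def DG (x : ℝ) : ℝ :=
  -γ - 1 / x + ∑' n : ℕ, (1 / ((n : ℝ) + 1) - 1 / (x + n + 1))

noncomputable def LG (x : ℝ) : ℝ :=
  -γ * x - Real.log x + ∑' n : ℕ, (x / ((n : ℝ) + 1) - Real.log (1 + x / ((n : ℝ) + 1)))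

lemma log_ineq {t : ℝ} (ht : 0 ≤ t) :
    0 ≤ t - Real.log (1+t) ∧ t - Real.log (1+t) ≤ t^2 := by
  have h0 : (0:ℝ) < 1 + t := by linarith
  have h1 : Real.log (1+t) ≤ t := by
    have := Real.log_le_sub_one_of_pos h0
    linarith
  have h2 : 1 - 1/(1+t) ≤ Real.log (1+t) := by
    have h3 := Real.log_le_sub_one_of_pos (show (0:ℝ) < (1+t)⁻¹ by positivity)
    rw [Real.log_inv] at h3
    rw [one_div]
    linarith
  refine ⟨by linarith, ?_⟩
  have e : t - (1 - 1/(1+t)) = t^2/(1+t) := by field_simp; ring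
  have h4 : t^2/(1+t) ≤ t^2 := div_le_self (sq_nonneg t) (by linarith)
  linarith

lemma LG_summable {x : ℝ} (hx : 0 ≤ x) :
    Summable (fun n : ℕ => x / ((n : ℝ) + 1) - Real.log (1 + x / ((n : ℝ) + 1))) := by
  refine Summable.of_nonneg_of_le
    (fun n => (log_ineq (by positivity : (0:ℝ) ≤ x / ((n:ℝ)+1))).1)
    (fun n => ?_) ((sum_base le_rfl).mul_left (x^2))
  refine le_trans (log_ineq (by positivity : (0:ℝ) ≤ x / ((n:ℝ)+1))).2 (le_of_eq ?_)
  rw [div_pow]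
  ring

lemma DG_summable {x : ℝ} (hx : 0 < x) :
    Summable (fun n : ℕ => 1 / ((n : ℝ) + 1) - 1 / (x + n + 1)) := by
  have hpos := hpos' hx
  refine Summable.of_nonneg_of_le (fun n => ?_) (fun n => ?_) ((sum_base le_rfl).mul_left x)
  · have : 1/(x+(n:ℝ)+1) ≤ 1/((n:ℝ)+1) :=
      one_div_le_one_div_of_le (by positivity) (by linarith [hpos n])
    linarith
  · have h1 : (0:ℝ) < (n:ℝ)+1 := by positivity
    have h2 : (0:ℝ) < x+(n:ℝ)+1 := by linarith [hpos n]
    have e : 1/((n:ℝ)+1) - 1/(x+n+1) = x/(((n:ℝ)+1)*(x+n+1)) := by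
      field_simp <;> ring
    rw [e, show x * (1/((n:ℝ)+1)^2) = x/(((n:ℝ)+1)*((n:ℝ)+1)) by ring]
    refine div_le_div_of_nonneg_left hx.le (by positivity) ?_
    nlinarith

lemma LG_eq_log_Gamma {x : ℝ} (hx : 0 < x) : LG x = Real.log (Real.Gamma x) := by
  have hs := LG_summable hx.le
  have h1 := hs.hasSum.tendsto_sum_nat
  have h2 : ∀ N : ℕ, ∑ n ∈ range N, (x/((n:ℝ)+1) - Real.log (1 + x/((n:ℝ)+1)))
      = Real.BohrMollerup.logGammaSeq x N + x*((harmonic N : ℝ) - Real.log N) + Real.log x := by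
    intro N
    have e1 : ∀ n ∈ range N, x/((n:ℝ)+1) - Real.log (1 + x/((n:ℝ)+1))
        = x * (1/((n:ℝ)+1)) - (Real.log (x+(n:ℝ)+1) - Real.log ((n:ℝ)+1)) := by
      intro n _
      have hn1 : (0:ℝ) < (n:ℝ)+1 := by positivity
      have hxn : (0:ℝ) < x+(n:ℝ)+1 := by linarith [hpos' hx n]
      rw [← Real.log_div hxn.ne' hn1.ne',
        show (x+(n:ℝ)+1)/((n:ℝ)+1) = 1 + x/((n:ℝ)+1) by field_simp <;> ring]
      ring
    rw [Finset.sum_congr rfl e1]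
    rw [Finset.sum_sub_distrib, Finset.sum_sub_distrib, ← Finset.mul_sum]
    have e3 : ∑ n ∈ range N, Real.log ((n:ℝ)+1) = Real.log (Nat.factorial N : ℝ) := by
      rw [show ∑ n ∈ range N, Real.log ((n:ℝ)+1) = Real.log (∏ n ∈ range N, ((n:ℝ)+1)) from
        (Real.log_prod (fun n _ => by positivity)).symm]
      congr 1
      rw [show ((Nat.factorial N : ℕ) : ℝ) = ((∏ i ∈ range N, (i+1) : ℕ) : ℝ) by
        rw [Finset.prod_range_add_one_eq_factorial], Nat.cast_prod]
      push_cast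
      rfl
    have e4 : ∑ m ∈ range (N+1), Real.log (x+(m:ℝ)) =
        Real.log x + ∑ n ∈ range N, Real.log (x+(n:ℝ)+1) := by
      rw [Finset.sum_range_succ']
      simp only [Nat.cast_zero, add_zero, Nat.cast_add, Nat.cast_one]
      rw [add_comm]
      congr 1
      refine Finset.sum_congr rfl fun i _ => ?_
      ring_nf
    have e5 : (harmonic N : ℝ) = ∑ n ∈ range N, 1/((n:ℝ)+1) := by
      rw [harmonic]
      push_cast
      simp [one_div]
    rw [Real.BohrMollerup.logGammaSeq, e3, e4, e5]
    ring
  have h3 : Tendsto (fun N : ℕ => Real.BohrMollerup.logGammaSeq x N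
      + x*((harmonic N : ℝ) - Real.log N) + Real.log x) atTop
      (𝓝 (Real.log (Real.Gamma x) + x*γ + Real.log x)) :=
    ((Real.BohrMollerup.tendsto_log_gamma hx).add
      (Real.tendsto_harmonic_sub_log.const_mul x)).add tendsto_const_nhds
  have h4 := tendsto_nhds_unique (h1.congr h2) h3
  unfold LG
  rw [h4]
  ring

lemma hasDerivAt_PG1 {x : ℝ} (hx : 0 < x) : HasDerivAt PG1 (-PG2 x) x := by
  have hc : (0:ℝ) < x/2 := by linarith
  have key : HasDerivAt (fun y => ∑' n : ℕ, 1/(y+(n:ℝ))^2) (∑' n : ℕ, -(2/(x+(n:ℝ))^3)) x := by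
    refine hasDerivAt_tsum_of_isPreconnected (u := fun n : ℕ => 2/(x/2+(n:ℝ))^3)
      (((sum_inv_pow hc (by norm_num : 2 ≤ 3)).mul_left 2).congr fun n => by ring)
      isOpen_Ioi (convex_Ioi (x/2)).isPreconnected
      (g := fun (n : ℕ) y => 1/(y+(n:ℝ))^2) (g' := fun (n : ℕ) y => -(2/(y+(n:ℝ))^3))
      (fun n y hy => ?_) (fun n y hy => ?_)
      (by simpa using half_lt_self hx) (sum_inv_pow hx le_rfl)
      (by simpa using half_lt_self hx)
    · beta_reduce
      have hy0 : (0:ℝ) < y + n := by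
        have : x/2 < y := hy
        linarith [Nat.cast_nonneg (α := ℝ) n]
      have h1 : HasDerivAt (fun y : ℝ => (y+(n:ℝ))^2) (2*(y+n)) y := by
        simpa using ((hasDerivAt_id y).add_const (n:ℝ)).fun_pow 2
      have h2 := h1.fun_inv (pow_ne_zero 2 hy0.ne')
      have h3 : HasDerivAt (fun y : ℝ => 1/(y+(n:ℝ))^2) (-(2*(y+n)) / ((y+n)^2)^2) y := by
        simpa [one_div] using h2
      exact h3.congr_deriv (by
        rw [neg_div, show ((y+(n:ℝ))^2)^2 = (y+n)^3*(y+n) by ring, mul_div_mul_right _ _ hy0.ne'])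
    · beta_reduce
      have hy0 : (0:ℝ) < y + n := by
        have : x/2 < y := hy
        linarith [Nat.cast_nonneg (α := ℝ) n]
      have hc0 : (0:ℝ) < x/2 + n := hpos' hc n
      rw [norm_neg, Real.norm_eq_abs, abs_of_nonneg (by positivity)]
      refine div_le_div_of_nonneg_left (by norm_num) (by positivity) ?_
      have : x/2 + (n:ℝ) ≤ y + n := by
        have : x/2 < y := hy
        linarith
      exact pow_le_pow_left₀ hc0.le this 3
  have h4 : (∑' n : ℕ, -(2/(x+(n:ℝ))^3)) = -PG2 x := by
    rw [PG2, tsum_neg]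
  rw [h4] at key
  exact key

lemma hasDerivAt_DG {x : ℝ} (hx : 0 < x) : HasDerivAt DG (PG1 x) x := by
  have hc : (0:ℝ) < x/2 := by linarith
  have hT : HasDerivAt (fun y => ∑' n : ℕ, (1/((n:ℝ)+1) - 1/(y+(n:ℝ)+1)))
      (∑' n : ℕ, 1/(x+(n:ℝ)+1)^2) x := by
    refine hasDerivAt_tsum_of_isPreconnected (u := fun n : ℕ => 1/(x/2+(n:ℝ)+1)^2)
      (sum_inv_pow_shift hc le_rfl)
      isOpen_Ioi (convex_Ioi (x/2)).isPreconnected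
      (g := fun (n : ℕ) y => 1/((n:ℝ)+1) - 1/(y+(n:ℝ)+1))
      (g' := fun (n : ℕ) y => 1/(y+(n:ℝ)+1)^2)
      (fun n y hy => ?_) (fun n y hy => ?_)
      (by simpa using half_lt_self hx) (DG_summable hx)
      (by simpa using half_lt_self hx)
    · beta_reduce
      have hy0 : (0:ℝ) < y + n + 1 := by
        have : x/2 < y := hy
        linarith [Nat.cast_nonneg (α := ℝ) n]
      have h1 : HasDerivAt (fun y : ℝ => y + (n:ℝ) + 1) 1 y :=
        ((hasDerivAt_id y).add_const (n:ℝ)).add_const 1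
      have h2 := h1.inv hy0.ne'
      have h3 := h2.const_sub (1/((n:ℝ)+1))
      have e : -(-1 / (y+(n:ℝ)+1)^2) = 1/(y+(n:ℝ)+1)^2 := by ring
      simpa [one_div, e] using h3
    · beta_reduce
      have hy0 : (0:ℝ) < y + n + 1 := by
        have : x/2 < y := hy
        linarith [Nat.cast_nonneg (α := ℝ) n]
      have hc0 : (0:ℝ) < x/2 + n + 1 := by linarith [hpos' hc n]
      rw [Real.norm_eq_abs, abs_of_nonneg (by positivity)]
      refine one_div_le_one_div_of_le (by positivity) ?_
      have : x/2 < y := hy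
      exact pow_le_pow_left₀ hc0.le (by linarith) 2
  have h5 : HasDerivAt (fun y : ℝ => -γ - 1/y) (1/x^2) x := by
    have h6 := (hasDerivAt_inv hx.ne').const_sub (-γ)
    have e : -(-(x^2)⁻¹) = 1/x^2 := by
      rw [neg_neg, one_div]
    simpa [one_div, e] using h6
  have total := h5.add hT
  have e2 : 1/x^2 + ∑' n : ℕ, 1/(x+(n:ℝ)+1)^2 = PG1 x := (PG1_eq hx).symm
  rw [e2] at total
  exact total

lemma hasDerivAt_LG {x : ℝ} (hx : 0 < x) : HasDerivAt LG (DG x) x := by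
  have hmem : x ∈ Ioo (0:ℝ) (x+1) := ⟨hx, lt_add_one x⟩
  have hT : HasDerivAt (fun y => ∑' n : ℕ, (y/((n:ℝ)+1) - Real.log (1 + y/((n:ℝ)+1))))
      (∑' n : ℕ, (1/((n:ℝ)+1) - 1/(x+(n:ℝ)+1))) x := by
    refine hasDerivAt_tsum_of_isPreconnected (u := fun n : ℕ => (x+1) * (1/((n:ℝ)+1)^2))
      ((sum_base le_rfl).mul_left (x+1))
      isOpen_Ioo (convex_Ioo (0:ℝ) (x+1)).isPreconnected
      (g := fun (n : ℕ) y => y/((n:ℝ)+1) - Real.log (1 + y/((n:ℝ)+1)))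
      (g' := fun (n : ℕ) y => 1/((n:ℝ)+1) - 1/(y+(n:ℝ)+1))
      (fun n y hy => ?_) (fun n y hy => ?_) hmem (LG_summable hx.le) hmem
    · beta_reduce
      have hn1 : (0:ℝ) < (n:ℝ)+1 := by positivity
      have hy0 : (0:ℝ) < y := hy.1
      have hyn : (0:ℝ) < y + n + 1 := by linarith [Nat.cast_nonneg (α := ℝ) n]
      have hpos1 : (0:ℝ) < 1 + y/((n:ℝ)+1) := by positivity
      have h1 : HasDerivAt (fun y : ℝ => 1 + y/((n:ℝ)+1)) (1/((n:ℝ)+1)) y := by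
        simpa using ((hasDerivAt_id y).div_const ((n:ℝ)+1)).const_add 1
      have h2 := h1.log hpos1.ne'
      have h3 := ((hasDerivAt_id y).div_const ((n:ℝ)+1)).fun_sub h2
      have e : (1/((n:ℝ)+1)) / (1 + y/((n:ℝ)+1)) = 1/(y+(n:ℝ)+1) := by
        rw [div_div]
        congr 1
        field_simp
        ring
      rw [e] at h3
      simpa using h3
    · beta_reduce
      have hn1 : (0:ℝ) < (n:ℝ)+1 := by positivity
      have hy0 : (0:ℝ) < y := hy.1
      have hyx : y ≤ x + 1 := hy.2.le
      have hyn : (0:ℝ) < y + n + 1 := by linarith [Nat.cast_nonneg (α := ℝ) n]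
      have e2 : 1/((n:ℝ)+1) - 1/(y+(n:ℝ)+1) = y/(((n:ℝ)+1)*(y+(n:ℝ)+1)) := by
        field_simp <;> ring
      rw [Real.norm_eq_abs, e2, abs_of_nonneg (div_nonneg hy0.le (by positivity))]
      rw [show (x+1) * (1/((n:ℝ)+1)^2) = (x+1)/(((n:ℝ)+1)^2) by ring]
      refine div_le_div₀ (by linarith) hyx (by positivity) ?_
      have : (n:ℝ)+1 ≤ y+(n:ℝ)+1 := by linarith
      nlinarith
  have h5 : HasDerivAt (fun y : ℝ => -γ * y - Real.log y) (-γ - 1/x) x := by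
    have h6 := ((hasDerivAt_id x).const_mul (-γ)).fun_sub (Real.hasDerivAt_log hx.ne')
    simpa [one_div] using h6
  exact h5.add hT

theorem strictConvexOn_exp_digamma' :
    StrictConvexOn ℝ (Set.Ioi 0) (fun x => Real.exp (iteratedDeriv 1 (fun y => Real.log (Real.Gamma y)) x)) := by
  have hpg : ∀ x : ℝ, 0 < x → iteratedDeriv 1 (fun y => Real.log (Real.Gamma y)) x = DG x := by
    intro x hx
    rw [iteratedDeriv_one]
    have hev : (fun y => Real.log (Real.Gamma y)) =ᶠ[𝓝 x] LG := by
      filter_upwards [Ioi_mem_nhds hx] with y hy using (LG_eq_log_Gamma hy).symm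
    rw [hev.deriv_eq]
    exact (hasDerivAt_LG hx).deriv
  refine strictConvexOn_of_deriv2_pos (convex_Ioi 0) ?_ ?_
  · refine ContinuousOn.congr (f := fun x => Real.exp (DG x)) ?_ ?_
    · intro x hx
      exact (Real.continuous_exp.continuousAt.comp
        (hasDerivAt_DG (mem_Ioi.mp hx)).differentiableAt.continuousAt).continuousWithinAt
    · intro x hx
      simp [hpg x (mem_Ioi.mp hx)]
  · intro x hx
    rw [interior_Ioi] at hx
    have hx0 : 0 < x := hx
    have hD1 : ∀ y : ℝ, 0 < y →
        HasDerivAt (fun z => Real.exp (DG z)) (Real.exp (DG y) * PG1 y) y :=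
      fun y hy => (hasDerivAt_DG hy).exp
    have hfh : (fun z => Real.exp (iteratedDeriv 1 (fun y => Real.log (Real.Gamma y)) z))
        =ᶠ[𝓝 x] fun z => Real.exp (DG z) := by
      filter_upwards [Ioi_mem_nhds hx0] with y hy
      rw [hpg y hy]
    have e1 := hfh.deriv
    have e2 : deriv (fun z => Real.exp (DG z)) =ᶠ[𝓝 x]
        fun y => Real.exp (DG y) * PG1 y := by
      filter_upwards [Ioi_mem_nhds hx0] with y hy
      exact (hD1 y hy).deriv
    have e3 := e1.trans e2
    have hD2 : HasDerivAt (fun y => Real.exp (DG y) * PG1 y)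
        ((Real.exp (DG x) * PG1 x) * PG1 x + Real.exp (DG x) * (-PG2 x)) x :=
      ((hasDerivAt_DG hx0).exp).mul (hasDerivAt_PG1 hx0)
    have hkey : deriv^[2] (fun z => Real.exp (iteratedDeriv 1 (fun y => Real.log (Real.Gamma y)) z)) x
        = (Real.exp (DG x) * PG1 x) * PG1 x + Real.exp (DG x) * (-PG2 x) := by
      show deriv (deriv _) x = _
      rw [e3.deriv_eq]
      exact hD2.deriv
    rw [hkey]
    have hF := FF_pos hx0
    rw [FF] at hF
    nlinarith [Real.exp_pos (DG x), mul_pos (Real.exp_pos (DG x)) hF]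

/-- The function `x ↦ exp(ψ₀(x))` is strictly convex on `(0,∞)`. -/
theorem strictConvexOn_exp_digamma :
    StrictConvexOn ℝ (Set.Ioi 0) (fun x => Real.exp (polygamma 0 x)) :=
  strictConvexOn_exp_digamma'
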